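/- For a natural number n, s(n) = n if and only if n ≡ 0 (mod 4) and n does not belong to any of the arithmetic progressions Q_r = {2^{4r}·j − 4r : j ≥ 1} for r = 1, 2, 3, …. -/

import Mathlib

/-- The sloping binary number `s n`: `n` plus the sum of `2^k` over all `k ≥ 1`
with `n + k ≡ 0 (mod 2^k)`. All such `k` satisfy `k ≤ n`, so the sum is finite. -/
def s (n : ℕ) : ℕ := n + ∑ k ∈ Finset.Icc 1 n, if 2 ^ k ∣ (n + k) then 2 ^ k else 0

theorem sloping_fixed_points (n : ℕ) :
    s n = n ↔
      n % 4 = 0 ∧ ∀ r : ℕ, 1 ≤ r → ¬ ∃ j : ℕ, 1 ≤ j ∧ n + 4 * r = 2 ^ (4 * r) * j := by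
  have hsum : s n = n ↔ ∀ k ∈ Finset.Icc 1 n, ¬ 2 ^ k ∣ (n + k) := by
    unfold s
    rw [Nat.add_eq_left, Finset.sum_eq_zero_iff]
    constructor
    · intro h k hk hd
      have h2 := h k hk
      rw [if_pos hd] at h2
      exact absurd h2 (by positivity)
    · intro h k hk
      rw [if_neg (h k hk)]
  rw [hsum]
  constructor
  · intro H
    constructor
    · by_contra h
      rcases Nat.even_or_odd n with he | ho
      · rw [Nat.even_iff] at he
        exact H 2 (Finset.mem_Icc.mpr ⟨by omega, by omega⟩) (by omega)
      · rw [Nat.odd_iff] at ho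
        exact H 1 (Finset.mem_Icc.mpr ⟨le_refl 1, by omega⟩) (by omega)
    · rintro r hr ⟨j, hj, hEq⟩
      have hlt : r < 2 ^ r := Nat.lt_two_pow_self
      have hle : 8 * r ≤ 2 ^ (4 * r) := by
        calc 8 * r ≤ 8 * 2 ^ r := by omega
        _ = 2 ^ (r + 3) := by ring
        _ ≤ 2 ^ (4 * r) := Nat.pow_le_pow_right (by norm_num) (by omega)
      have hjle : 2 ^ (4 * r) ≤ 2 ^ (4 * r) * j := Nat.le_mul_of_pos_right _ hj
      have hmem : 4 * r ∈ Finset.Icc 1 n := Finset.mem_Icc.mpr ⟨by omega, by omega⟩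
      exact H (4 * r) hmem ⟨j, hEq⟩
  · rintro ⟨h4, hQ⟩ k hk hd
    rw [Finset.mem_Icc] at hk
    obtain ⟨j, hj⟩ := hd
    have h2d : (2 : ℕ) ∣ 2 ^ k := dvd_pow_self 2 (by omega)
    have h2nk : (2 : ℕ) ∣ n + k := h2d.trans ⟨j, hj⟩
    have hk2 : 2 ≤ k := by omega
    have h4d : (4 : ℕ) ∣ 2 ^ k := by
      have : (2 : ℕ) ^ 2 ∣ 2 ^ k := pow_dvd_pow 2 hk2
      simpa using this
    have h4nk : (4 : ℕ) ∣ n + k := h4d.trans ⟨j, hj⟩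
    have h4k : 4 ∣ k := by omega
    obtain ⟨r, hr⟩ := h4k
    have hj1 : 1 ≤ j := by
      rcases Nat.eq_zero_or_pos j with h0 | h0
      · rw [h0, mul_zero] at hj; omega
      · exact h0
    exact hQ r (by omega) ⟨j, hj1, by rw [← hr]; exact hj⟩
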